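/- The projective curve in ℙ³ defined by Z₀² = Z₂² + Z₁Z₃ and Z₁² = Z₂² + Z₂Z₃ has exactly one point with Z₂ = 0, namely (0 : 0 : 0 : 1), and after setting v = Z₀/Z₂, u = Z₁/Z₂, w = Z₃/Z₂ and eliminating w, its affine part satisfies v² = u³ - u + 1. -/

import Mathlib

/-- The projective curve in `ℙ³` defined by `Z₀² = Z₂² + Z₁Z₃` and
`Z₁² = Z₂² + Z₂Z₃` has exactly one point with `Z₂ = 0`, namely `(0:0:0:1)`;
and on the affine part `Z₂ ≠ 0`, setting `v = Z₀/Z₂`, `u = Z₁/Z₂` one has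
`v² = u³ - u + 1`. -/
theorem stmt_11 :
    (∀ Z : Fin 4 → ℚ, Z ≠ 0 →
      Z 0 ^ 2 = Z 2 ^ 2 + Z 1 * Z 3 → Z 1 ^ 2 = Z 2 ^ 2 + Z 2 * Z 3 →
      Z 2 = 0 → Z 0 = 0 ∧ Z 1 = 0 ∧ Z 3 ≠ 0) ∧
    (∀ Z : Fin 4 → ℚ,
      Z 0 ^ 2 = Z 2 ^ 2 + Z 1 * Z 3 → Z 1 ^ 2 = Z 2 ^ 2 + Z 2 * Z 3 →
      Z 2 ≠ 0 →
      (Z 0 / Z 2) ^ 2 = (Z 1 / Z 2) ^ 3 - Z 1 / Z 2 + 1) := by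
  constructor
  · intro Z hZ h1 h2 h3
    have hz1 : Z 1 = 0 := by
      have : Z 1 ^ 2 = 0 := by rw [h2, h3]; ring
      exact pow_eq_zero_iff (by norm_num) |>.mp this
    have hz0 : Z 0 = 0 := by
      have : Z 0 ^ 2 = 0 := by rw [h1, h3, hz1]; ring
      exact pow_eq_zero_iff (by norm_num) |>.mp this
    refine ⟨hz0, hz1, fun h4 => hZ ?_⟩
    funext i
    fin_cases i <;> simp [hz0, hz1, h3, h4]
  · intro Z h1 h2 h0
    have hZ3 : Z 3 = (Z 1 ^ 2 - Z 2 ^ 2) / Z 2 := by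
      field_simp
      linarith [h2]
    rw [hZ3] at h1
    field_simp at h1 ⊢
    linear_combination h1
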